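/- Let Σ be a simplicial polyhedral fan in ℝ^d with n rays and ray matrix U of rank d, and let J ∈ Σ^c be a primitive collection. For ρ ∈ J, let τ_ρ ∈ Σ(|J|−1) be the cone generated by J∖{ρ}. Then the intersection Sing(A_Σ) ∩ Λ_J is cut out by the 2·|J| equations: x_ρ = 0 and (∏_{ρ′ ∉ nb(τ_ρ), ρ′ ∉ J} x_{ρ′}) · Adj_{Σ_{τ_ρ},U_{τ_ρ}} = 0, for all ρ ∈ J. In particular, if Σ is the normal fan of a simple d-dimensional polytope P with facet set indexed by J, and Δ_Q = ∩_{Q′∈J∖{Q}} Q′ for Q ∈ J, then Sing(A_P) ∩ Λ_J is cut out by x_Q = 0 and (∏_{Q′: Q′∩Δ_Q=∅, Q′∉J} x_{Q′}) · Adj_{Δ_Q,U_{Δ_Q}} = 0 for all Q ∈ J. -/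
import Mathlib


open MvPolynomial Finset MeasureTheory
open scoped ENNReal

/-- The polyhedral cone spanned by the ray generators (rows of `U`) indexed by `σ`. -/
def coneOf {ι κ : Type*} [Fintype ι] (U : Matrix ι κ ℝ) (σ : Finset ι) : Set (κ → ℝ) :=
  {y | ∃ c : ι → ℝ, (∀ i, 0 ≤ c i) ∧ (∀ i, i ∉ σ → c i = 0) ∧ y = ∑ i, c i • U i}

/-- A simplicial polyhedral fan with rays indexed by `ι`, living in the space `κ → ℝ`.
Since the fan is simplicial, each cone is recorded by its finite set of rays. -/
structure SimplicialFan (ι κ : Type*) [Fintype ι] [DecidableEq ι] where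
  /-- the ray generator matrix: its rows are the chosen ray generators -/
  U : Matrix ι κ ℝ
  /-- the cones of the fan, each recorded by its set of rays -/
  cones : Finset (Finset ι)
  empty_mem : ∅ ∈ cones
  ray_mem : ∀ i : ι, {i} ∈ cones
  downward : ∀ σ ∈ cones, ∀ τ, τ ⊆ σ → τ ∈ cones
  indep : ∀ σ ∈ cones, LinearIndependent ℝ (fun i : σ => U i.1)
  inter : ∀ σ ∈ cones, ∀ τ ∈ cones, coneOf U σ ∩ coneOf U τ = coneOf U (σ ∩ τ)

/-- `|det|` of the square submatrix of `U` on the rows indexed by `σ`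
(zero if `σ` does not have exactly `card κ` elements). -/
noncomputable def absDetRows {ι κ : Type*} [Fintype κ] [DecidableEq κ]
    (U : Matrix ι κ ℝ) (σ : Finset ι) : ℝ :=
  if h : σ.card = Fintype.card κ then
    |(Matrix.of fun j k : κ =>
        U ((σ.equivFin.symm (Fintype.equivFinOfCardEq h.symm j)) : ι) k).det|
  else 0

/-- The universal adjoint polynomial of the fan data `(U, cones)`:
`Adj = ∑_{σ ∈ Σ(d)} |det U_σ| ∏_{ρ ∉ σ(1)} x_ρ`. -/
noncomputable def Adj {ι κ : Type*} [Fintype ι] [DecidableEq ι] [Fintype κ] [DecidableEq κ]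
    (U : Matrix ι κ ℝ) (cones : Finset (Finset ι)) : MvPolynomial ι ℝ :=
  ∑ σ ∈ cones.filter fun σ => σ.card = Fintype.card κ,
    MvPolynomial.C (absDetRows U σ) * ∏ ρ ∈ σᶜ, MvPolynomial.X ρ

/-- The toric amplitude `Amp = ∑_{σ ∈ Σ(d)} |det U_σ| / ∏_{ρ ∈ σ(1)} x_ρ`
as a real-valued function. -/
noncomputable def Amp {ι κ : Type*} [Fintype ι] [DecidableEq ι] [Fintype κ] [DecidableEq κ]
    (U : Matrix ι κ ℝ) (cones : Finset (Finset ι)) (x : ι → ℝ) : ℝ :=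
  ∑ σ ∈ cones.filter fun σ => σ.card = Fintype.card κ, absDetRows U σ / ∏ ρ ∈ σ, x ρ

/-- The toric amplitude with values in `ℝ≥0∞` (for identities with possibly infinite
dual volumes). -/
noncomputable def AmpE {ι κ : Type*} [Fintype ι] [DecidableEq ι] [Fintype κ] [DecidableEq κ]
    (U : Matrix ι κ ℝ) (cones : Finset (Finset ι)) (x : ι → ℝ) : ℝ≥0∞ :=
  ∑ σ ∈ cones.filter fun σ => σ.card = Fintype.card κ,
    ENNReal.ofReal (absDetRows U σ) / ∏ ρ ∈ σ, ENNReal.ofReal (x ρ)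

/-- The toric amplitude as an element of the field of rational functions. -/
noncomputable def AmpFrac {ι κ : Type*} [Fintype ι] [DecidableEq ι] [Fintype κ] [DecidableEq κ]
    (U : Matrix ι κ ℝ) (cones : Finset (Finset ι)) : FractionRing (MvPolynomial ι ℝ) :=
  ∑ σ ∈ cones.filter fun σ => σ.card = Fintype.card κ,
    algebraMap (MvPolynomial ι ℝ) (FractionRing (MvPolynomial ι ℝ)) (MvPolynomial.C (absDetRows U σ)) /
      algebraMap (MvPolynomial ι ℝ) (FractionRing (MvPolynomial ι ℝ)) (∏ ρ ∈ σ, MvPolynomial.X ρ)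

/-- The toric amplitude of fan data whose rays are indexed by a type `α` mapping to `ι`
via `f`, viewed inside the rational function field on the `ι`-variables. -/
noncomputable def AmpFracVia {α ι κ' : Type*} [Fintype α] [DecidableEq α]
    [Fintype κ'] [DecidableEq κ']
    (U' : Matrix α κ' ℝ) (cones' : Finset (Finset α)) (f : α → ι) :
    FractionRing (MvPolynomial ι ℝ) :=
  ∑ σ ∈ cones'.filter fun σ => σ.card = Fintype.card κ',
    algebraMap (MvPolynomial ι ℝ) (FractionRing (MvPolynomial ι ℝ)) (MvPolynomial.C (absDetRows U' σ)) /
      algebraMap (MvPolynomial ι ℝ) (FractionRing (MvPolynomial ι ℝ)) (∏ ρ ∈ σ, MvPolynomial.X (f ρ))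

/-- The polyhedron `P_z = {y : U y + z ≥ 0}`. -/
def Pz {ι κ : Type*} [Fintype κ] (U : Matrix ι κ ℝ) (z : ι → ℝ) : Set (κ → ℝ) :=
  {y | ∀ i, 0 ≤ (∑ j, U i j * y j) + z i}

/-- The face of `P_z` where the inequalities indexed by `τ` are tight. -/
def faceOf {ι κ : Type*} [Fintype κ] (U : Matrix ι κ ℝ) (z : ι → ℝ) (τ : Finset ι) :
    Set (κ → ℝ) :=
  {y | y ∈ Pz U z ∧ ∀ i ∈ τ, (∑ j, U i j * y j) + z i = 0}

/-- `F` is the normal fan of the polytope `P_z`, which is a full-dimensional simple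
(bounded) polytope whose facets are indexed by the rays of `F`: a set of inequalities
spans a cone of the normal fan iff they are simultaneously tight on a nonempty face. -/
def IsNormalFanOf {ι κ : Type*} [Fintype ι] [DecidableEq ι] [Fintype κ]
    (F : SimplicialFan ι κ) (z : ι → ℝ) : Prop :=
  Bornology.IsBounded (Pz F.U z) ∧ (interior (Pz F.U z)).Nonempty ∧
    ∀ σ : Finset ι, σ ∈ F.cones ↔ (faceOf F.U z σ).Nonempty

/-- The polar dual `{u : u ⬝ y ≥ -1 for all y ∈ P}`. -/
def polarDual {κ : Type*} [Fintype κ] (P : Set (κ → ℝ)) : Set (κ → ℝ) :=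
  {u | ∀ y ∈ P, -1 ≤ ∑ j, u j * y j}

/-- Warren's adjoint polynomial `adj_{P_z}(y) = Adj(U y + z)`. -/
noncomputable def warrenAdj {ι κ : Type*} [Fintype ι] [DecidableEq ι] [Fintype κ] [DecidableEq κ]
    (U : Matrix ι κ ℝ) (cones : Finset (Finset ι)) (z : ι → ℝ) : MvPolynomial κ ℝ :=
  MvPolynomial.aeval (fun i : ι => (∑ j, MvPolynomial.C (U i j) * MvPolynomial.X j) + MvPolynomial.C (z i))
    (Adj U cones)

/-- The neighbours `nb(τ)` of a cone `τ`: rays `ρ ∉ τ` with `τ ∪ {ρ}` a cone. -/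
def nbF {ι : Type*} [Fintype ι] [DecidableEq ι] (cones : Finset (Finset ι)) (τ : Finset ι) :
    Finset ι :=
  Finset.univ.filter fun ρ => ρ ∉ τ ∧ insert ρ τ ∈ cones

/-- The rows of `U * T` indexed by `τ` are the first `k` standard basis vectors. -/
def RowsStd {ι : Type*} {d : ℕ} (U : Matrix ι (Fin d) ℝ) (T : Matrix (Fin d) (Fin d) ℝ)
    (τ : Finset ι) (k : ℕ) : Prop :=
  ∃ g : {ρ : ι // ρ ∈ τ} → Fin d, Function.Injective g ∧ (∀ ρ, (g ρ : ℕ) < k) ∧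
    ∀ ρ : {ρ : ι // ρ ∈ τ}, (U * T) ρ.1 = Pi.single (g ρ) 1

/-- The ray matrix of the star fan `Σ_τ`: the last `d-k` columns of `U * T`, on the
rows indexed by `nb(τ)` (here `N`). -/
def starU {ι : Type*} {d : ℕ} (U : Matrix ι (Fin d) ℝ) (T : Matrix (Fin d) (Fin d) ℝ)
    (N : Finset ι) (k : ℕ) : Matrix {ρ : ι // ρ ∈ N} {j : Fin d // k ≤ (j : ℕ)} ℝ :=
  fun ρ j => (U * T) ρ.1 j.1

/-- The cones of the star fan `Σ_τ`, recorded by their sets of rays (as subsets of `N = nb(τ)`). -/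
def starCones {ι : Type*} [DecidableEq ι] (cones : Finset (Finset ι)) (τ : Finset ι)
    (N : Finset ι) : Finset (Finset {ρ : ι // ρ ∈ N}) :=
  (cones.filter fun σ => τ ⊆ σ).image fun σ => (σ \ τ).subtype fun ρ => ρ ∈ N

/-- Restriction of polynomials to the coordinate subspace `Λ_τ = {x_ρ = 0, ρ ∈ τ}`. -/
noncomputable def restrictTo {ι : Type*} {R : Type*} [CommSemiring R] [DecidableEq ι]
    (τ : Finset ι) : MvPolynomial ι R →ₐ[R] MvPolynomial ι R :=
  MvPolynomial.aeval fun ρ => if ρ ∈ τ then 0 else MvPolynomial.X ρ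

/-- The deformation cone of a (complete simplicial) fan: those `x` for which each
"virtual vertex" of `P_x` determined by a maximal cone satisfies all inequalities. -/
def DefCone {ι κ : Type*} [Fintype ι] [DecidableEq ι] [Fintype κ] (F : SimplicialFan ι κ) :
    Set (ι → ℝ) :=
  {x | ∀ σ ∈ F.cones, σ.card = Fintype.card κ →
    ∃ v : κ → ℝ, (∀ ρ ∈ σ, (∑ j, F.U ρ j * v j) + x ρ = 0) ∧
      ∀ ρ : ι, 0 ≤ (∑ j, F.U ρ j * v j) + x ρ}

/-- The `(d+1) × (d+1)` determinant `W_Δ(x)` of the matrix with rows `(u_ρ, x_ρ)`,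
`ρ ∈ S` (defined up to sign; zero if `S` does not have `d+1` elements). -/
noncomputable def Wdet {ι κ : Type*} [Fintype κ] [DecidableEq κ]
    (U : Matrix ι κ ℝ) (S : Finset ι) (x : ι → ℝ) : ℝ :=
  if h : S.card = Fintype.card (Option κ) then
    (Matrix.of fun a b : Option κ =>
      Option.elim b (x ((S.equivFin.symm (Fintype.equivFinOfCardEq h.symm a)) : ι))
        (fun k => U ((S.equivFin.symm (Fintype.equivFinOfCardEq h.symm a)) : ι) k)).det
  else 0


open MvPolynomial Finset

lemma pderiv_prod_X {ι : Type*} [DecidableEq ι] (s : Finset ι) (ρ : ι) :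
    MvPolynomial.pderiv ρ (∏ ρ' ∈ s, (MvPolynomial.X ρ' : MvPolynomial ι ℝ)) =
      if ρ ∈ s then ∏ ρ' ∈ s.erase ρ, MvPolynomial.X ρ' else 0 := by
  induction s using Finset.induction with
  | empty => simp
  | @insert a s ha ih =>
    rw [Finset.prod_insert ha, pderiv_mul, ih]
    by_cases h : ρ = a
    · subst h
      simp [ha, Finset.erase_insert ha]
    · rw [pderiv_X_of_ne (Ne.symm h)]
      by_cases hs : ρ ∈ s
      · simp only [hs, if_true, Finset.mem_insert, h, false_or, if_true, zero_mul, zero_add]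
        rw [Finset.erase_insert_of_ne (fun e => h e.symm), Finset.prod_insert (fun hmem => ha (Finset.mem_of_mem_erase hmem))]
      · simp [hs, h]

lemma absDet_inv {ι κ : Type*} [Fintype κ] [DecidableEq κ] [DecidableEq ι]
    (U : Matrix ι κ ℝ) (σ : Finset ι) (h : σ.card = Fintype.card κ)
    (e : κ → ι) (he : Function.Injective e) (hmem : ∀ j, e j ∈ σ) :
    absDetRows U σ = |Matrix.det (Matrix.of fun j k => U (e j) k)| := by
  classical
  have hcard : Fintype.card κ = Fintype.card {a // a ∈ σ} := by
    rw [Fintype.card_coe, h]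
  let E₀ : κ ≃ {a // a ∈ σ} := (Fintype.equivFinOfCardEq h.symm).trans σ.equivFin.symm
  let E : κ → {a // a ∈ σ} := fun j => ⟨e j, hmem j⟩
  have hEinj : Function.Injective E := fun a b hab => he (congrArg Subtype.val hab)
  have hEbij : Function.Bijective E := (Fintype.bijective_iff_injective_and_card E).2 ⟨hEinj, hcard⟩
  let Ee : κ ≃ {a // a ∈ σ} := Equiv.ofBijective E hEbij
  let π : Equiv.Perm κ := Ee.trans E₀.symm
  have key : ∀ j, e j = ((E₀ (π j) : {a // a ∈ σ}) : ι) := by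
    intro j
    have : E₀ (π j) = Ee j := by simp [π]
    rw [this]
    rfl
  rw [absDetRows, dif_pos h]
  have : (Matrix.of fun j k => U (e j) k) =
      (Matrix.of fun j k : κ => U ((σ.equivFin.symm (Fintype.equivFinOfCardEq h.symm j)) : ι) k).submatrix π id := by
    ext j k
    simp only [Matrix.submatrix_apply, Matrix.of_apply, id]
    rw [key j]
    rfl
  rw [this, Matrix.det_permute]
  rcases Int.units_eq_one_or (Equiv.Perm.sign π) with hs | hs <;> rw [hs] <;> simp

lemma card_lt_subtype {d k : ℕ} (h : k ≤ d) : Fintype.card {j : Fin d // (j:ℕ) < k} = k := by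
  rw [Fintype.card_congr (⟨fun j => (⟨j.1.1, j.2⟩ : Fin k),
    fun i => ⟨⟨i.1, lt_of_lt_of_le i.2 h⟩, i.2⟩,
    fun j => by rfl, fun i => by rfl⟩ : {j : Fin d // (j:ℕ) < k} ≃ Fin k)]
  exact Fintype.card_fin k

lemma card_ge_subtype {d k : ℕ} (h : k ≤ d) :
    Fintype.card {j : Fin d // k ≤ (j:ℕ)} = d - k := by
  rw [Fintype.card_congr (⟨fun j => (⟨j.1.1 - k, by omega⟩ : Fin (d-k)),
    fun i => ⟨⟨k + i.1, by omega⟩, by simp⟩,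
    fun j => by apply Subtype.ext; apply Fin.ext; have := j.2; simp; omega,
    fun i => by apply Fin.ext; simp⟩ : {j : Fin d // k ≤ (j:ℕ)} ≃ Fin (d-k))]
  exact Fintype.card_fin _

lemma absDetRows_star {ι : Type*} [Fintype ι] [DecidableEq ι] {d k : ℕ}
    (U : Matrix ι (Fin d) ℝ) (T : Matrix (Fin d) (Fin d) ℝ)
    (τ N σ : Finset ι) (hτσ : τ ⊆ σ) (hσN : σ \ τ ⊆ N) (hNτ : ∀ a ∈ N, a ∉ τ)
    (hτcard : τ.card = k) (hσcard : σ.card = d) (hkd : k ≤ d)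
    (g : {ρ : ι // ρ ∈ τ} → Fin d) (hg : Function.Injective g) (hglt : ∀ ρ, (g ρ : ℕ) < k)
    (hrows : ∀ ρ : {ρ : ι // ρ ∈ τ}, (U * T) ρ.1 = Pi.single (g ρ) 1) :
    absDetRows (starU U T N k) ((σ \ τ).subtype (· ∈ N)) = |T.det| * absDetRows U σ := by
  classical
  set lt := {j : Fin d // (j:ℕ) < k}
  set ge := {j : Fin d // k ≤ (j:ℕ)}
  have hsd : (σ \ τ).card = d - k := by
    rw [Finset.card_sdiff_of_subset hτσ, hτcard, hσcard]
  have hcard_ge : Fintype.card ge = d - k := card_ge_subtype hkd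
  have hcard_lt : Fintype.card lt = k := card_lt_subtype hkd
  -- bijection τ ≃ lt
  have hgbij : Function.Bijective (fun ρ : {ρ : ι // ρ ∈ τ} => (⟨g ρ, hglt ρ⟩ : lt)) := by
    refine (Fintype.bijective_iff_injective_and_card _).2 ⟨?_, ?_⟩
    · intro a b hab
      exact hg (congrArg Subtype.val hab)
    · rw [Fintype.card_coe, hτcard, hcard_lt]
  let g' : {ρ : ι // ρ ∈ τ} ≃ lt := Equiv.ofBijective _ hgbij
  -- bijection ge ≃ σ \ τ
  let h' : ge ≃ {a : ι // a ∈ σ \ τ} :=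
    Fintype.equivOfCardEq (by rw [hcard_ge, Fintype.card_coe, hsd])
  -- the chosen row selection
  let E : Fin d → ι := fun j =>
    if hj : (j : ℕ) < k then ((g'.symm ⟨j, hj⟩ : {ρ : ι // ρ ∈ τ}) : ι)
    else ((h' ⟨j, not_lt.1 hj⟩ : {a : ι // a ∈ σ \ τ}) : ι)
  have hEτ : ∀ (j : Fin d) (hj : (j : ℕ) < k), E j = ((g'.symm ⟨j, hj⟩ : {ρ : ι // ρ ∈ τ}) : ι) := by
    intro j hj; simp only [E, dif_pos hj]
  have hEge : ∀ (j : Fin d) (hj : ¬ (j : ℕ) < k), E j = ((h' ⟨j, not_lt.1 hj⟩ : {a : ι // a ∈ σ \ τ}) : ι) := by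
    intro j hj; simp only [E, dif_neg hj]
  have hEmem : ∀ j, E j ∈ σ := by
    intro j
    by_cases hj : (j : ℕ) < k
    · rw [hEτ j hj]; exact hτσ (g'.symm ⟨j, hj⟩).2
    · rw [hEge j hj]; exact (Finset.mem_sdiff.1 (h' ⟨j, not_lt.1 hj⟩).2).1
  have hEinj : Function.Injective E := by
    intro a b hab
    by_cases ha : (a : ℕ) < k <;> by_cases hb : (b : ℕ) < k
    · rw [hEτ a ha, hEτ b hb] at hab
      have := g'.symm.injective (Subtype.ext hab)
      exact congrArg Subtype.val this
    · rw [hEτ a ha, hEge b hb] at hab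
      exact absurd (hab ▸ (g'.symm ⟨a, ha⟩).2)
        (Finset.mem_sdiff.1 (h' ⟨b, not_lt.1 hb⟩).2).2.elim
    · rw [hEge a ha, hEτ b hb] at hab
      exact absurd (hab ▸ (h' ⟨a, not_lt.1 ha⟩).2)
        (fun hm => (Finset.mem_sdiff.1 hm).2 (g'.symm ⟨b, hb⟩).2)
    · rw [hEge a ha, hEge b hb] at hab
      have := h'.injective (Subtype.ext hab)
      exact congrArg Subtype.val this
  -- column & row split
  let c : lt ⊕ ge ≃ Fin d :=
    (Equiv.sumCongr (Equiv.refl lt) (Equiv.subtypeEquivRight (fun j => not_lt.symm))).trans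
      (Equiv.sumCompl (fun j : Fin d => (j : ℕ) < k))
  have hc_inl : ∀ i : lt, c (Sum.inl i) = i.1 := fun i => rfl
  have hc_inr : ∀ i : ge, c (Sum.inr i) = i.1 := fun i => rfl
  let M : Matrix (Fin d) (Fin d) ℝ := Matrix.of fun a b => (U * T) (E a) b
  let D : Matrix ge ge ℝ :=
    Matrix.of fun i j => (U * T) ((h' i : {a : ι // a ∈ σ \ τ}) : ι) j.1
  let Cm : Matrix ge lt ℝ :=
    Matrix.of fun i j => (U * T) ((h' i : {a : ι // a ∈ σ \ τ}) : ι) j.1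
  have hblock : M.submatrix c c = Matrix.fromBlocks 1 0 Cm D := by
    ext a b
    rcases a with i | i <;> rcases b with j | j
    · show M (c (Sum.inl i)) (c (Sum.inl j)) = (1 : Matrix lt lt ℝ) i j
      rw [hc_inl, hc_inl]
      show (U * T) (E i.1) j.1 = _
      rw [hEτ i.1 i.2]
      have hgi : g (g'.symm i) = i.1 := congrArg Subtype.val (g'.apply_symm_apply i)
      rw [hrows (g'.symm i), hgi]
      by_cases hij : i = j
      · subst hij; rw [Matrix.one_apply_eq, Pi.single_eq_same]
      · rw [Matrix.one_apply_ne' (fun e => hij e.symm),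
          Pi.single_eq_of_ne (fun e => hij (Subtype.ext e.symm))]
    · show M (c (Sum.inl i)) (c (Sum.inr j)) = (0 : Matrix lt ge ℝ) i j
      rw [hc_inl, hc_inr]
      show (U * T) (E i.1) j.1 = 0
      rw [hEτ i.1 i.2]
      have hgi : g (g'.symm i) = i.1 := congrArg Subtype.val (g'.apply_symm_apply i)
      rw [hrows (g'.symm i), hgi]
      have : (j.1 : Fin d) ≠ i.1 := Fin.ne_of_val_ne (by have := i.2; have := j.2; omega)
      rw [Pi.single_eq_of_ne this]
    · show M (c (Sum.inr i)) (c (Sum.inl j)) = Cm i j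
      rw [hc_inr, hc_inl]
      show (U * T) (E i.1) j.1 = Cm i j
      rw [hEge i.1 (not_lt.2 i.2)]
      rfl
    · show M (c (Sum.inr i)) (c (Sum.inr j)) = D i j
      rw [hc_inr, hc_inr]
      show (U * T) (E i.1) j.1 = D i j
      rw [hEge i.1 (not_lt.2 i.2)]
      rfl
  have hdetM : M.det = D.det := by
    rw [← Matrix.det_submatrix_equiv_self c M, hblock, Matrix.det_fromBlocks_zero₁₂,
      Matrix.det_one, one_mul]
  have hMmul : M = (Matrix.of fun a b => U (E a) b) * T := by
    ext a b
    simp [M, Matrix.mul_apply]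
  have h1 : absDetRows U σ = |(Matrix.of fun a b => U (E a) b).det| :=
    absDet_inv U σ (by rw [hσcard, Fintype.card_fin]) E hEinj hEmem
  let e₂ : ge → {ρ : ι // ρ ∈ N} := fun i => ⟨((h' i : {a : ι // a ∈ σ \ τ}) : ι), hσN (h' i).2⟩
  have he₂inj : Function.Injective e₂ := by
    intro a b hab
    have hv := congrArg Subtype.val hab
    exact h'.injective (Subtype.ext hv)
  have he₂mem : ∀ i, e₂ i ∈ (σ \ τ).subtype (· ∈ N) := fun i => Finset.mem_subtype.2 (h' i).2
  have hcards : ((σ \ τ).subtype (· ∈ N)).card = Fintype.card ge := by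
    rw [hcard_ge, Finset.card_subtype, Finset.filter_true_of_mem (fun a ha => hσN ha), hsd]
  have h2 : absDetRows (starU U T N k) ((σ \ τ).subtype (· ∈ N)) = |D.det| := by
    rw [absDet_inv (starU U T N k) _ hcards e₂ he₂inj he₂mem]
    rfl
  calc absDetRows (starU U T N k) ((σ \ τ).subtype (· ∈ N)) = |D.det| := h2
    _ = |M.det| := by rw [hdetM]
    _ = |(Matrix.of fun a b => U (E a) b).det * T.det| := by rw [hMmul, Matrix.det_mul]
    _ = |T.det| * absDetRows U σ := by rw [abs_mul, h1, mul_comm]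

lemma aeval_pderiv_Adj {ι κ : Type*} [Fintype ι] [DecidableEq ι] [Fintype κ] [DecidableEq κ]
    (U : Matrix ι κ ℝ) (cones : Finset (Finset ι)) (x : ι → ℂ) (ρ : ι) :
    MvPolynomial.aeval x (MvPolynomial.pderiv ρ (Adj U cones)) =
      ∑ σ ∈ cones.filter (fun σ => σ.card = Fintype.card κ),
        algebraMap ℝ ℂ (absDetRows U σ) *
          (if ρ ∈ σᶜ then ∏ ρ' ∈ σᶜ.erase ρ, x ρ' else 0) := by
  rw [Adj, map_sum, map_sum]
  refine Finset.sum_congr rfl fun σ hσ => ?_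
  rw [pderiv_C_mul, pderiv_prod_X, map_mul, aeval_C]
  congr 1
  split_ifs with h
  · rw [map_prod]
    exact Finset.prod_congr rfl fun a _ => aeval_X x a
  · simp

lemma aeval_Adj {ι κ : Type*} [Fintype ι] [DecidableEq ι] [Fintype κ] [DecidableEq κ]
    (U : Matrix ι κ ℝ) (cones : Finset (Finset ι)) (x : ι → ℂ) :
    MvPolynomial.aeval x (Adj U cones) =
      ∑ σ ∈ cones.filter (fun σ => σ.card = Fintype.card κ),
        algebraMap ℝ ℂ (absDetRows U σ) * ∏ ρ' ∈ σᶜ, x ρ' := by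
  rw [Adj, map_sum]
  refine Finset.sum_congr rfl fun σ hσ => ?_
  rw [map_mul, aeval_C, map_prod]
  exact congrArg _ (Finset.prod_congr rfl fun a _ => aeval_X x a)
/-- (The singular locus inside a coordinate subspace `Λ_J`.)
Let `J ∈ Σᶜ` be a primitive collection, i.e. `J` is not contained in a cone of `Σ` but
for each `ρ ∈ J` the set `τ_ρ = J ∖ {ρ}` spans a cone of `Σ(|J|-1)`. For each `ρ ∈ J`
fix an invertible matrix `T_ρ` adapted to `τ_ρ` as in the restriction lemma, giving the
star fan data `(U_{τ_ρ}, Σ_{τ_ρ})`. Then for a point `x` of `Λ_J` (i.e. `x_ρ = 0` for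
`ρ ∈ J`), `x` lies in `Sing(A_Σ)` (all partial derivatives of `Adj_Σ` vanish at `x`)
if and only if the `|J|` equations
`(∏_{ρ' ∉ nb(τ_ρ), ρ' ∉ J} x_{ρ'}) · Adj_{Σ_{τ_ρ}, U_{τ_ρ}} = 0`, `ρ ∈ J`, hold;
together with the `|J|` equations `x_ρ = 0`, `ρ ∈ J`, these `2|J|` equations cut out
`Sing(A_Σ) ∩ Λ_J`. -/
theorem statement15 {ι : Type*} [Fintype ι] [DecidableEq ι] {d : ℕ}
    (F : SimplicialFan ι (Fin d)) (hrank : F.U.rank = d)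
    (J : Finset ι)
    (hJ : ∀ σ ∈ F.cones, ¬ J ⊆ σ) (hJprim : ∀ ρ ∈ J, J.erase ρ ∈ F.cones)
    (T : ι → Matrix (Fin d) (Fin d) ℝ)
    (hT : ∀ ρ ∈ J, (T ρ).det ≠ 0 ∧ RowsStd F.U (T ρ) (J.erase ρ) (J.card - 1)) :
    ∀ x : ι → ℂ, (∀ ρ ∈ J, x ρ = 0) →
      ((∀ ρ : ι, MvPolynomial.aeval x (MvPolynomial.pderiv ρ (Adj F.U F.cones)) = 0) ↔
        ∀ ρ ∈ J,
          MvPolynomial.aeval x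
            ((∏ ρ' ∈ (nbF F.cones (J.erase ρ) ∪ J)ᶜ, MvPolynomial.X ρ') *
              MvPolynomial.rename Subtype.val
                (Adj (starU F.U (T ρ) (nbF F.cones (J.erase ρ)) (J.card - 1))
                  (starCones F.cones (J.erase ρ) (nbF F.cones (J.erase ρ))))) = 0) := by
  classical
  intro x hx
  -- Step A: derivatives in directions outside J vanish automatically on Λ_J
  have stepA : ∀ ρ : ι, ρ ∉ J →
      MvPolynomial.aeval x (MvPolynomial.pderiv ρ (Adj F.U F.cones)) = 0 := by
    intro ρ hρ
    rw [aeval_pderiv_Adj]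
    refine Finset.sum_eq_zero fun σ hσ => ?_
    rw [Finset.mem_filter] at hσ
    split_ifs with h
    · obtain ⟨ρ'', hρ''J, hρ''σ⟩ := Finset.not_subset.1 (hJ σ hσ.1)
      have hm : ρ'' ∈ σᶜ.erase ρ :=
        Finset.mem_erase.2 ⟨fun e => hρ (e ▸ hρ''J), Finset.mem_compl.2 hρ''σ⟩
      rw [Finset.prod_eq_zero hm (hx ρ'' hρ''J), mul_zero]
    · rw [mul_zero]
  -- Step B: the key identity for ρ ∈ J
  have key : ∀ ρ ∈ J,
      MvPolynomial.aeval x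
        ((∏ ρ' ∈ (nbF F.cones (J.erase ρ) ∪ J)ᶜ, MvPolynomial.X ρ') *
          MvPolynomial.rename Subtype.val
            (Adj (starU F.U (T ρ) (nbF F.cones (J.erase ρ)) (J.card - 1))
              (starCones F.cones (J.erase ρ) (nbF F.cones (J.erase ρ))))) =
      algebraMap ℝ ℂ |(T ρ).det| *
        MvPolynomial.aeval x (MvPolynomial.pderiv ρ (Adj F.U F.cones)) := by
    intro ρ hρ
    set τ := J.erase ρ with hτdef
    set N := nbF F.cones τ with hNdef
    set k := J.card - 1 with hkdef
    have hτcones : τ ∈ F.cones := hJprim ρ hρ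
    have hτcard : τ.card = k := by rw [hτdef, Finset.card_erase_of_mem hρ, hkdef]
    have hρτ : ρ ∉ τ := Finset.notMem_erase ρ J
    have hinsert : insert ρ τ = J := Finset.insert_erase hρ
    have hkd : k ≤ d := by
      have h1 : Fintype.card {a : ι // a ∈ τ} ≤ Module.finrank ℝ (Fin d → ℝ) :=
        (F.indep τ hτcones).fintype_card_le_finrank
      rwa [Fintype.card_coe, Module.finrank_fin_fun, hτcard] at h1
    have hNτ : ∀ a ∈ N, a ∉ τ := by
      intro a haN
      rw [hNdef, nbF, Finset.mem_filter] at haN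
      exact haN.2.1
    have hNJ : ∀ a ∈ N, a ∉ J := by
      intro a haN haJ
      rw [hNdef, nbF, Finset.mem_filter] at haN
      obtain ⟨-, haτ, hins⟩ := haN
      rcases eq_or_ne a ρ with rfl | hne
      · exact hJ _ hins (by rw [hinsert])
      · exact haτ (Finset.mem_erase.2 ⟨hne, haJ⟩)
    have hσfacts : ∀ σ ∈ F.cones, τ ⊆ σ → (σ \ τ ⊆ N ∧ ρ ∉ σ) := by
      intro σ hσ hτσ
      constructor
      · intro a ha
        rw [Finset.mem_sdiff] at ha
        rw [hNdef, nbF, Finset.mem_filter]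
        exact ⟨Finset.mem_univ a, ha.2,
          F.downward σ hσ _ (Finset.insert_subset ha.1 hτσ)⟩
      · intro hρσ
        exact hJ σ hσ (by rw [← hinsert]; exact Finset.insert_subset hρσ hτσ)
    have hcardκ' : Fintype.card {j : Fin d // k ≤ (j : ℕ)} = d - k := card_ge_subtype hkd
    -- rewrite LHS (the derivative side)
    rw [aeval_pderiv_Adj]
    have hLHS1 : (∑ σ ∈ F.cones.filter (fun σ => σ.card = Fintype.card (Fin d)),
          algebraMap ℝ ℂ (absDetRows F.U σ) *
            (if ρ ∈ σᶜ then ∏ ρ' ∈ σᶜ.erase ρ, x ρ' else 0)) =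
        ∑ σ ∈ (F.cones.filter (fun σ => σ.card = Fintype.card (Fin d))).filter
            (fun σ => τ ⊆ σ),
          algebraMap ℝ ℂ (absDetRows F.U σ) * ∏ ρ' ∈ σᶜ.erase ρ, x ρ' := by
      rw [← Finset.sum_filter_of_ne (p := fun σ => τ ⊆ σ) ?_]
      · refine Finset.sum_congr rfl fun σ hσ => ?_
        rw [Finset.mem_filter, Finset.mem_filter] at hσ
        have hρσ : ρ ∉ σ := (hσfacts σ hσ.1.1 hσ.2).2
        rw [if_pos (Finset.mem_compl.2 hρσ)]
      · intro σ hσ hne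
        rw [Finset.mem_filter] at hσ
        by_contra hτσ
        apply hne
        obtain ⟨ρ'', hρ''τ, hρ''σ⟩ := Finset.not_subset.1 hτσ
        split_ifs with h
        · have hm : ρ'' ∈ σᶜ.erase ρ :=
            Finset.mem_erase.2 ⟨fun e => hρτ (e ▸ hρ''τ), Finset.mem_compl.2 hρ''σ⟩
          rw [Finset.prod_eq_zero hm (hx ρ'' (Finset.mem_of_mem_erase hρ''τ)), mul_zero]
        · rw [mul_zero]
    rw [hLHS1, Finset.mul_sum]
    -- rewrite RHS (the star side)
    rw [map_mul, map_prod, aeval_rename, aeval_Adj, Finset.mul_sum]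
    have hXev : ∀ ρ' ∈ (N ∪ J)ᶜ,
        MvPolynomial.aeval x (MvPolynomial.X ρ' : MvPolynomial ι ℝ) = x ρ' :=
      fun ρ' _ => MvPolynomial.aeval_X x ρ'
    rw [Finset.prod_congr rfl hXev]
    -- structure of star cones
    have hs₂ : ∀ sb ∈ (starCones F.cones τ N).filter
        (fun sb => sb.card = Fintype.card {j : Fin d // k ≤ (j : ℕ)}),
        ∃ σ', σ' ∈ F.cones ∧ τ ⊆ σ' ∧ σ'.card = Fintype.card (Fin d) ∧
          sb = (σ' \ τ).subtype (fun a => a ∈ N) ∧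
          τ ∪ sb.map (Function.Embedding.subtype fun a => a ∈ N) = σ' := by
      intro sb hsb
      rw [Finset.mem_filter] at hsb
      obtain ⟨hsb1, hsbcard⟩ := hsb
      rw [starCones, Finset.mem_image] at hsb1
      obtain ⟨σ', hσ', rfl⟩ := hsb1
      rw [Finset.mem_filter] at hσ'
      obtain ⟨hσ'c, hτσ'⟩ := hσ'
      have hσN : σ' \ τ ⊆ N := (hσfacts σ' hσ'c hτσ').1
      have hmapeq : ((σ' \ τ).subtype (fun a => a ∈ N)).map
          (Function.Embedding.subtype fun a => a ∈ N) = σ' \ τ :=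
        Finset.subtype_map_of_mem (fun a ha => hσN ha)
      have hunion : τ ∪ ((σ' \ τ).subtype (fun a => a ∈ N)).map
          (Function.Embedding.subtype fun a => a ∈ N) = σ' := by
        rw [hmapeq, Finset.union_sdiff_of_subset hτσ']
      have hcards : σ'.card = Fintype.card (Fin d) := by
        have h1 : ((σ' \ τ).subtype (fun a => a ∈ N)).card = (σ' \ τ).card := by
          have := congrArg Finset.card hmapeq
          rwa [Finset.card_map] at this
        have h2 : (σ' \ τ).card = σ'.card - k := by rw [Finset.card_sdiff_of_subset hτσ', hτcard]
        have h3 : τ.card ≤ σ'.card := Finset.card_le_card hτσ'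
        rw [h1, h2, hcardκ'] at hsbcard
        rw [Fintype.card_fin]
        omega
      exact ⟨σ', hσ'c, hτσ', hcards, rfl, hunion⟩
    -- the bijection between star cones and maximal cones containing τ
    refine Finset.sum_nbij'
      (i := fun sb => τ ∪ sb.map (Function.Embedding.subtype fun a => a ∈ N))
      (j := fun σ => (σ \ τ).subtype (fun a => a ∈ N)) ?_ ?_ ?_ ?_ ?_
    · intro sb hsb
      obtain ⟨σ', hc, hτσ', hcard, hsbeq, hun⟩ := hs₂ sb hsb
      beta_reduce
      rw [hun]
      exact Finset.mem_filter.2 ⟨Finset.mem_filter.2 ⟨hc, hcard⟩, hτσ'⟩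
    · intro σ hσ
      rw [Finset.mem_filter] at hσ
      obtain ⟨hσ1, hτσ⟩ := hσ
      rw [Finset.mem_filter] at hσ1
      beta_reduce
      refine Finset.mem_filter.2 ⟨?_, ?_⟩
      · rw [starCones, Finset.mem_image]
        exact ⟨σ, Finset.mem_filter.2 ⟨hσ1.1, hτσ⟩, rfl⟩
      · rw [Finset.card_subtype,
          Finset.filter_true_of_mem (fun a ha => (hσfacts σ hσ1.1 hτσ).1 ha),
          Finset.card_sdiff_of_subset hτσ, hτcard, hcardκ', hσ1.2, Fintype.card_fin]
    · intro sb hsb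
      obtain ⟨σ', hc, hτσ', hcard, hsbeq, hun⟩ := hs₂ sb hsb
      beta_reduce
      rw [hun]
      exact hsbeq.symm
    · intro σ hσ
      rw [Finset.mem_filter] at hσ
      obtain ⟨hσ1, hτσ⟩ := hσ
      rw [Finset.mem_filter] at hσ1
      beta_reduce
      rw [Finset.subtype_map_of_mem (fun a ha => (hσfacts σ hσ1.1 hτσ).1 ha),
        Finset.union_sdiff_of_subset hτσ]
    · intro sb hsb
      obtain ⟨σ', hc, hτσ', hcard, hsbeq, hun⟩ := hs₂ sb hsb
      beta_reduce
      rw [hun]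
      subst hsbeq
      obtain ⟨g, hg, hglt, hrows⟩ := (hT ρ hρ).2
      have hσN : σ' \ τ ⊆ N := (hσfacts σ' hc hτσ').1
      have hρσ' : ρ ∉ σ' := (hσfacts σ' hc hτσ').2
      have hdet := absDetRows_star F.U (T ρ) τ N σ' hτσ' hσN hNτ hτcard
        (by rw [hcard, Fintype.card_fin]) hkd g hg hglt hrows
      have hset : σ'ᶜ.erase ρ = (N ∪ J)ᶜ ∪ (N \ (σ' \ τ)) := by
        ext a
        constructor
        · intro ha
          obtain ⟨hne, hnσ⟩ := Finset.mem_erase.1 ha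
          have hnσ' : a ∉ σ' := Finset.mem_compl.1 hnσ
          by_cases haN : a ∈ N
          · exact Finset.mem_union_right _ (Finset.mem_sdiff.2
              ⟨haN, fun hc2 => hnσ' (Finset.mem_sdiff.1 hc2).1⟩)
          · refine Finset.mem_union_left _ (Finset.mem_compl.2 ?_)
            intro hmem
            rcases Finset.mem_union.1 hmem with h | h
            · exact haN h
            · exact hnσ' (hτσ' (Finset.mem_erase.2 ⟨hne, h⟩))
        · intro ha
          rcases Finset.mem_union.1 ha with h | h
          · have h' := Finset.mem_compl.1 h
            have haN : a ∉ N := fun hc2 => h' (Finset.mem_union_left _ hc2)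
            have haJ : a ∉ J := fun hc2 => h' (Finset.mem_union_right _ hc2)
            refine Finset.mem_erase.2 ⟨fun e => haJ (by rw [e]; exact hρ),
              Finset.mem_compl.2 ?_⟩
            intro hc2
            by_cases haτ : a ∈ τ
            · exact haJ (Finset.mem_of_mem_erase haτ)
            · exact haN (hσN (Finset.mem_sdiff.2 ⟨hc2, haτ⟩))
          · obtain ⟨haN, hns⟩ := Finset.mem_sdiff.1 h
            have haτ : a ∉ τ := hNτ a haN
            refine Finset.mem_erase.2 ⟨fun e => (hNJ a haN) (by rw [e]; exact hρ),
              Finset.mem_compl.2 ?_⟩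
            intro hc2
            exact hns (Finset.mem_sdiff.2 ⟨hc2, haτ⟩)
      have hdisj : Disjoint ((N ∪ J)ᶜ) (N \ (σ' \ τ)) := by
        rw [Finset.disjoint_left]
        intro a ha hb
        exact (Finset.mem_compl.1 ha) (Finset.mem_union_left _ (Finset.mem_sdiff.1 hb).1)
      have hmap : (((σ' \ τ).subtype (fun a => a ∈ N))ᶜ).map
          (Function.Embedding.subtype fun a => a ∈ N) = N \ (σ' \ τ) := by
        ext a
        constructor
        · intro hmem
          rw [Finset.mem_map] at hmem
          obtain ⟨b, hb, rfl⟩ := hmem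
          rw [Finset.mem_compl, Finset.mem_subtype] at hb
          exact Finset.mem_sdiff.2 ⟨b.2, hb⟩
        · intro hmem
          obtain ⟨h1, h2⟩ := Finset.mem_sdiff.1 hmem
          rw [Finset.mem_map]
          exact ⟨⟨a, h1⟩, Finset.mem_compl.2 (fun hc2 => h2 (Finset.mem_subtype.1 hc2)), rfl⟩
      have hprod : (∏ ρ' ∈ σ'ᶜ.erase ρ, x ρ') =
          (∏ ρ' ∈ (N ∪ J)ᶜ, x ρ') *
            ∏ ρ' ∈ ((σ' \ τ).subtype (fun a => a ∈ N))ᶜ, (x ∘ Subtype.val) ρ' := by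
        rw [hset, Finset.prod_union hdisj]
        congr 1
        rw [← hmap, Finset.prod_map]
        rfl
      rw [hdet, map_mul, hprod]
      ring
  constructor
  · intro h ρ hρ
    rw [key ρ hρ, h ρ, mul_zero]
  · intro h ρ
    by_cases hρ : ρ ∈ J
    · have hk := key ρ hρ
      rw [h ρ hρ] at hk
      have hdet : algebraMap ℝ ℂ |(T ρ).det| ≠ 0 := by
        simp only [ne_eq, map_eq_zero, abs_eq_zero]
        exact (hT ρ hρ).1
      rcases mul_eq_zero.1 hk.symm with h0 | h0
      · exact absurd h0 hdet
      · exact h0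
    · exact stepA ρ hρ
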